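/- Lyapunov decrease for EXP-D-RL under hypo-monotonicity: let ε > 0, γ > 0, μ > 0, consider N players with action counts n^p, n = Σ_p n^p, strategy space Δ = Π_p Δ^{n^p} ⊂ ℝⁿ, blockwise soft-max σ : ℝⁿ → ℝⁿ, and a continuous payoff map U : Δ → ℝⁿ such that −U is μ-hypo-monotone on Δ, i.e., (x − x')ᵀ(U(x) − U(x')) ≤ μ‖x − x'‖₂² for all x, x' ∈ Δ. Let z̄* ∈ ℝⁿ satisfy z̄* = U(σ(z̄*)), and define V(z) = Σ_p (lse_ε(z^p) − lse_ε(z̄*^p) − σ_ε(z̄*^p)ᵀ(z^p − z̄*^p)). Then along every differentiable solution z : ℝ → ℝⁿ of ż(t) = γ(U(σ(z(t))) − z(t)), one has d/dt V(z(t)) ≤ −γ(ε − μ)‖σ(z(t)) − σ(z̄*)‖₂² for all t. -/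

import Mathlib

open Filter

/-- The soft-max function with temperature `ε`. -/
noncomputable def softmax (ε : ℝ) {m : ℕ} (w : Fin m → ℝ) : Fin m → ℝ :=
  fun i => Real.exp (w i / ε) / ∑ j, Real.exp (w j / ε)

/-- The log-sum-exp function with temperature `ε`. -/
noncomputable def lse (ε : ℝ) {m : ℕ} (w : Fin m → ℝ) : ℝ :=
  ε * Real.log (∑ j, Real.exp (w j / ε))

/-- The blockwise soft-max `σ(z) = (σ_ε(z^p))_p`. -/
noncomputable def softmaxBlk (ε : ℝ) {N : ℕ} {nAct : Fin N → ℕ}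
    (z : ∀ p, Fin (nAct p) → ℝ) : ∀ p, Fin (nAct p) → ℝ :=
  fun p => softmax ε (z p)

/-- The strategy space `Δ = Π_p Δ^{n^p}`. -/
def simplexProd (N : ℕ) (nAct : Fin N → ℕ) : Set (∀ p, Fin (nAct p) → ℝ) :=
  {x | ∀ p, (∀ i, 0 ≤ x p i) ∧ ∑ i, x p i = 1}

/-- The Bregman-divergence storage function
`V(z) = Σ_p (lse_ε(z^p) − lse_ε(z̄^p) − σ_ε(z̄^p)ᵀ(z^p − z̄^p))`. -/
noncomputable def bregV (ε : ℝ) {N : ℕ} {nAct : Fin N → ℕ}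
    (zbar z : ∀ p, Fin (nAct p) → ℝ) : ℝ :=
  ∑ p, (lse ε (z p) - lse ε (zbar p) - ∑ i, softmax ε (zbar p) i * (z p i - zbar p i))

section Aux

variable (ε : ℝ) {m : ℕ}

lemma expSum_pos (hm : 0 < m) (w : Fin m → ℝ) : 0 < ∑ j, Real.exp (w j / ε) := by
  have : Nonempty (Fin m) := ⟨⟨0, hm⟩⟩
  exact Finset.sum_pos (fun j _ => Real.exp_pos _) Finset.univ_nonempty

lemma softmax_pos (hm : 0 < m) (w : Fin m → ℝ) (i : Fin m) : 0 < softmax ε w i :=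
  div_pos (Real.exp_pos _) (expSum_pos ε hm w)

lemma softmax_le_one (hm : 0 < m) (w : Fin m → ℝ) (i : Fin m) : softmax ε w i ≤ 1 := by
  rw [softmax, div_le_one (expSum_pos ε hm w)]
  exact Finset.single_le_sum (f := fun j => Real.exp (w j / ε))
    (fun j _ => (Real.exp_pos _).le) (Finset.mem_univ i)

lemma softmax_sum (hm : 0 < m) (w : Fin m → ℝ) : ∑ i, softmax ε w i = 1 := by
  simp only [softmax]
  rw [← Finset.sum_div, div_self (expSum_pos ε hm w).ne']

lemma eps_log_softmax (hε : 0 < ε) (hm : 0 < m) (w : Fin m → ℝ) (i : Fin m) :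
    ε * Real.log (softmax ε w i) = w i - lse ε w := by
  rw [softmax, lse]
  rw [Real.log_div (Real.exp_pos _).ne' (expSum_pos ε hm w).ne', Real.log_exp, mul_sub,
    mul_div_cancel₀ _ hε.ne']

lemma log_sub_ge {a b : ℝ} (hb : 0 < b) (hba : b ≤ a) (ha1 : a ≤ 1) :
    a - b ≤ Real.log a - Real.log b := by
  have ha : 0 < a := hb.trans_le hba
  have h1 : Real.log (b / a) ≤ b / a - 1 := Real.log_le_sub_one_of_pos (div_pos hb ha)
  rw [Real.log_div hb.ne' ha.ne'] at h1
  have h3 : a - b ≤ (a - b) / a := by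
    rw [le_div_iff₀ ha]; nlinarith
  have h4 : (a - b) / a = 1 - b / a := by field_simp
  linarith

lemma sq_le_logmul {a b : ℝ} (ha : 0 < a) (ha1 : a ≤ 1) (hb : 0 < b) (hb1 : b ≤ 1) :
    (a - b) ^ 2 ≤ (Real.log a - Real.log b) * (a - b) := by
  rcases le_total b a with h | h
  · have := log_sub_ge hb h ha1; nlinarith
  · have := log_sub_ge ha h hb1; nlinarith

lemma cocoercive (hε : 0 < ε) (hm : 0 < m) (w w' : Fin m → ℝ) :
    ε * ∑ i, (softmax ε w i - softmax ε w' i) ^ 2 ≤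
      ∑ i, (w i - w' i) * (softmax ε w i - softmax ε w' i) := by
  have hsum0 : ∑ i, (softmax ε w i - softmax ε w' i) = 0 := by
    rw [Finset.sum_sub_distrib, softmax_sum ε hm w, softmax_sum ε hm w']; ring
  have hrw : ∑ i, (w i - w' i) * (softmax ε w i - softmax ε w' i)
      = ε * ∑ i, (Real.log (softmax ε w i) - Real.log (softmax ε w' i)) *
          (softmax ε w i - softmax ε w' i)
        + (lse ε w - lse ε w') * ∑ i, (softmax ε w i - softmax ε w' i) := by
    rw [Finset.mul_sum, Finset.mul_sum, ← Finset.sum_add_distrib]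
    refine Finset.sum_congr rfl fun i _ => ?_
    have h1 := eps_log_softmax ε hε hm w i
    have h2 := eps_log_softmax ε hε hm w' i
    have hw : w i - w' i =
        ε * (Real.log (softmax ε w i) - Real.log (softmax ε w' i)) + (lse ε w - lse ε w') := by
      rw [mul_sub]; linarith
    rw [hw]; ring
  rw [hrw, hsum0, mul_zero, add_zero]
  refine mul_le_mul_of_nonneg_left ?_ hε.le
  exact Finset.sum_le_sum fun i _ => sq_le_logmul (softmax_pos ε hm w i)
    (softmax_le_one ε hm w i) (softmax_pos ε hm w' i) (softmax_le_one ε hm w' i)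

end Aux

/-- Lyapunov decrease for EXP-D-RL under `μ`-hypo-monotonicity: if `−U` is
`μ`-hypo-monotone on `Δ` and `z̄* = U(σ(z̄*))`, then along every solution of
`ż = γ(U(σ(z)) − z)` one has `d/dt V(z(t)) ≤ −γ(ε − μ)‖σ(z(t)) − σ(z̄*)‖₂²`. -/
theorem lyapunov_decrease_hypo_monotone (ε γ μ : ℝ) (hε : 0 < ε) (hγ : 0 < γ) (hμ : 0 < μ)
    (N : ℕ) (nAct : Fin N → ℕ) (hn : ∀ p, 0 < nAct p)
    (U : (∀ p, Fin (nAct p) → ℝ) → ∀ p, Fin (nAct p) → ℝ)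
    (hU_cont : ContinuousOn U (simplexProd N nAct))
    (hU_hypo : ∀ x ∈ simplexProd N nAct, ∀ x' ∈ simplexProd N nAct,
      ∑ p, ∑ i, (x p i - x' p i) * (U x p i - U x' p i) ≤
        μ * ∑ p, ∑ i, (x p i - x' p i) ^ 2)
    (zs : ∀ p, Fin (nAct p) → ℝ) (hzs : U (softmaxBlk ε zs) = zs)
    (z : ℝ → ∀ p, Fin (nAct p) → ℝ)
    (hz : ∀ t, ∀ p, ∀ i,
      HasDerivAt (fun s => z s p i) (γ * (U (softmaxBlk ε (z t)) p i - z t p i)) t) :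
    ∀ t, deriv (fun s => bregV ε zs (z s)) t ≤
      -γ * (ε - μ) * ∑ p, ∑ i, (softmax ε (z t p) i - softmax ε (zs p) i) ^ 2 := by
  intro t
  set d : ∀ p, Fin (nAct p) → ℝ := fun p i => γ * (U (softmaxBlk ε (z t)) p i - z t p i) with hd
  -- derivative of each lse term
  have hlse : ∀ p, HasDerivAt (fun s => lse ε (z s p)) (∑ i, softmax ε (z t p) i * d p i) t := by
    intro p
    have hS : HasDerivAt (fun s => ∑ j, Real.exp (z s p j / ε))
        (∑ j, Real.exp (z t p j / ε) * (d p j / ε)) t := by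
      apply HasDerivAt.fun_sum
      intro j _
      exact ((hz t p j).div_const ε).exp
    have hpos := expSum_pos ε (hn p) (z t p)
    have hlog := (hS.log hpos.ne').const_mul ε
    have heq : ∑ i, softmax ε (z t p) i * d p i =
        ε * ((∑ j, Real.exp (z t p j / ε) * (d p j / ε)) / ∑ j, Real.exp (z t p j / ε)) := by
      simp only [softmax]
      rw [mul_comm ε, div_mul_eq_mul_div, Finset.sum_mul, Finset.sum_div]
      refine Finset.sum_congr rfl fun j _ => ?_
      rw [div_mul_eq_mul_div]
      congr 1
      rw [mul_assoc, div_mul_cancel₀ _ hε.ne']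
    rw [show (fun s => lse ε (z s p)) = fun s => ε * Real.log (∑ j, Real.exp (z s p j / ε)) from
      rfl, heq]
    exact hlog
  have hterm : ∀ p, HasDerivAt
      (fun s => lse ε (z s p) - lse ε (zs p) - ∑ i, softmax ε (zs p) i * (z s p i - zs p i))
      (∑ i, (softmax ε (z t p) i - softmax ε (zs p) i) * d p i) t := by
    intro p
    have h2 : HasDerivAt (fun s => ∑ i, softmax ε (zs p) i * (z s p i - zs p i))
        (∑ i, softmax ε (zs p) i * d p i) t := by
      apply HasDerivAt.fun_sum
      intro i _
      exact ((hz t p i).sub_const _).const_mul _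
    have h3 := ((hlse p).sub_const (lse ε (zs p))).fun_sub h2
    refine h3.congr_deriv ?_
    rw [← Finset.sum_sub_distrib]
    exact Finset.sum_congr rfl fun i _ => by ring
  have hV : HasDerivAt (fun s => bregV ε zs (z s))
      (∑ p, ∑ i, (softmax ε (z t p) i - softmax ε (zs p) i) * d p i) t := by
    have : (fun s => bregV ε zs (z s)) = fun s =>
        ∑ p, (lse ε (z s p) - lse ε (zs p) - ∑ i, softmax ε (zs p) i * (z s p i - zs p i)) := by
      funext s; rfl
    rw [this]
    exact HasDerivAt.fun_sum fun p _ => hterm p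
  rw [hV.deriv]
  -- membership of softmax values in the simplex product
  have hmem : ∀ w : ∀ p, Fin (nAct p) → ℝ, softmaxBlk ε w ∈ simplexProd N nAct := by
    intro w p
    exact ⟨fun i => (softmax_pos ε (hn p) (w p) i).le, softmax_sum ε (hn p) (w p)⟩
  have hA : ∑ p, ∑ i, (softmax ε (z t p) i - softmax ε (zs p) i) *
      (U (softmaxBlk ε (z t)) p i - U (softmaxBlk ε zs) p i) ≤
      μ * ∑ p, ∑ i, (softmax ε (z t p) i - softmax ε (zs p) i) ^ 2 :=
    hU_hypo (softmaxBlk ε (z t)) (hmem _) (softmaxBlk ε zs) (hmem _)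
  have hB : ε * ∑ p, ∑ i, (softmax ε (z t p) i - softmax ε (zs p) i) ^ 2 ≤
      ∑ p, ∑ i, (z t p i - zs p i) * (softmax ε (z t p) i - softmax ε (zs p) i) := by
    rw [Finset.mul_sum]
    exact Finset.sum_le_sum fun p _ => cocoercive ε hε (hn p) (z t p) (zs p)
  have hsplit : ∑ p, ∑ i, (softmax ε (z t p) i - softmax ε (zs p) i) * d p i
      = γ * ((∑ p, ∑ i, (softmax ε (z t p) i - softmax ε (zs p) i) *
            (U (softmaxBlk ε (z t)) p i - U (softmaxBlk ε zs) p i))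
          - ∑ p, ∑ i, (z t p i - zs p i) * (softmax ε (z t p) i - softmax ε (zs p) i)) := by
    rw [mul_sub, Finset.mul_sum, Finset.mul_sum, ← Finset.sum_sub_distrib]
    refine Finset.sum_congr rfl fun p _ => ?_
    rw [Finset.mul_sum, Finset.mul_sum, ← Finset.sum_sub_distrib]
    refine Finset.sum_congr rfl fun i _ => ?_
    have hzsi : U (softmaxBlk ε zs) p i = zs p i := by rw [hzs]
    rw [hd, hzsi]
    ring
  rw [hsplit]
  set S := ∑ p, ∑ i, (softmax ε (z t p) i - softmax ε (zs p) i) ^ 2 with hS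
  have key : (∑ p, ∑ i, (softmax ε (z t p) i - softmax ε (zs p) i) *
        (U (softmaxBlk ε (z t)) p i - U (softmaxBlk ε zs) p i))
      - ∑ p, ∑ i, (z t p i - zs p i) * (softmax ε (z t p) i - softmax ε (zs p) i)
      ≤ (μ - ε) * S := by linarith
  calc γ * ((∑ p, ∑ i, (softmax ε (z t p) i - softmax ε (zs p) i) *
            (U (softmaxBlk ε (z t)) p i - U (softmaxBlk ε zs) p i))
          - ∑ p, ∑ i, (z t p i - zs p i) * (softmax ε (z t p) i - softmax ε (zs p) i))
      ≤ γ * ((μ - ε) * S) := mul_le_mul_of_nonneg_left key hγ.le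
    _ = -γ * (ε - μ) * S := by ring
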